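/- Let (Ω,F,μ) be a finite measure space, 1 < p < ∞, and let f_n ⇀ f weakly in L^p(μ). Let φ : ℝ → ℝ be convex with φ(f_n) ⇀ φ(f) weakly in L¹(μ). Let C ⊆ ℝ be the set where φ is strictly convex (every point of C has a neighborhood on which φ is strictly convex). Then there is a μ-full set Ω' such that, after passing to a subsequence, f_n(ω) → f(ω) for μ-a.e. ω ∈ Ω' with f(ω) ∈ C. -/

import Mathlib

open MeasureTheory
open scoped ENNReal


/-- Left-derivative-like subgradient selection for a convex function. -/
noncomputable def lderivSel (φ : ℝ → ℝ) (x : ℝ) : ℝ :=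
  ⨆ n : ℕ, (φ (x - 1 / (n + 1)) - φ x) / ((x - 1 / (n + 1)) - x)

lemma lderivSel_bdd (φ : ℝ → ℝ) (hφ : ConvexOn ℝ Set.univ φ) (x : ℝ) :
    BddAbove (Set.range fun n : ℕ => (φ (x - 1 / (n + 1)) - φ x) / ((x - 1 / (n + 1)) - x)) := by
  refine ⟨(φ (x + 1) - φ x) / ((x + 1) - x), ?_⟩
  rintro _ ⟨n, rfl⟩
  have hn : (0:ℝ) < 1 / (n + 1) := by positivity
  exact hφ.secant_mono (Set.mem_univ x) (Set.mem_univ _) (Set.mem_univ _)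
    (show x - 1/(n+1) ≠ x by intro h; linarith) (show x + 1 ≠ x by intro h; linarith) (by linarith)

lemma lderivSel_le_slope (φ : ℝ → ℝ) (hφ : ConvexOn ℝ Set.univ φ) {x y : ℝ} (hxy : x < y) :
    lderivSel φ x ≤ (φ y - φ x) / (y - x) := by
  refine ciSup_le fun n => ?_
  have hn : (0:ℝ) < 1 / (n + 1) := by positivity
  exact hφ.secant_mono (Set.mem_univ x) (Set.mem_univ _) (Set.mem_univ _)
    (show x - 1/(n+1) ≠ x by intro h; linarith) (ne_of_gt hxy) (by linarith)

lemma slope_le_lderivSel (φ : ℝ → ℝ) (hφ : ConvexOn ℝ Set.univ φ) {x y : ℝ} (hyx : y < x) :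
    (φ y - φ x) / (y - x) ≤ lderivSel φ x := by
  obtain ⟨n, hn⟩ := exists_nat_one_div_lt (show (0:ℝ) < x - y by linarith)
  have hn0 : (0:ℝ) < 1 / (n + 1) := by positivity
  have h1 : (φ y - φ x) / (y - x) ≤ (φ (x - 1/(n+1)) - φ x) / ((x - 1/(n+1)) - x) :=
    hφ.secant_mono (Set.mem_univ x) (Set.mem_univ _) (Set.mem_univ _)
      (ne_of_lt hyx) (show x - 1/(n+1) ≠ x by intro h; linarith) (by linarith)
  exact h1.trans (le_ciSup (lderivSel_bdd φ hφ x) n)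

lemma lderivSel_subgrad (φ : ℝ → ℝ) (hφ : ConvexOn ℝ Set.univ φ) (x y : ℝ) :
    lderivSel φ x * (y - x) ≤ φ y - φ x := by
  rcases lt_trichotomy x y with h | rfl | h
  · have h1 := lderivSel_le_slope φ hφ h
    rw [le_div_iff₀ (by linarith)] at h1
    linarith
  · simp
  · have h1 := slope_le_lderivSel φ hφ h
    rw [div_le_iff_of_neg (by linarith)] at h1
    linarith

lemma lderivSel_mono (φ : ℝ → ℝ) (hφ : ConvexOn ℝ Set.univ φ) : Monotone (lderivSel φ) := by
  intro x y hxy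
  rcases eq_or_lt_of_le hxy with rfl | h
  · exact le_refl _
  · have h1 := lderivSel_le_slope φ hφ h
    have h2 := slope_le_lderivSel φ hφ h
    have h3 : (φ y - φ x) / (y - x) = (φ x - φ y) / (x - y) := by
      rw [← neg_div_neg_eq]; ring_nf
    exact h1.trans (h3 ▸ h2)

/-- Bregman-type remainder. -/
def breg (φ : ℝ → ℝ) (x q z : ℝ) : ℝ := φ z - φ x - q * (z - x)

lemma ptwise_conv (φ : ℝ → ℝ) (hφ : ConvexOn ℝ Set.univ φ) (x q : ℝ)
    (hq : ∀ y, q * (y - x) ≤ φ y - φ x)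
    (ε : ℝ) (hε : 0 < ε) (hsc : StrictConvexOn ℝ (Metric.ball x ε) φ)
    (y : ℕ → ℝ)
    (hy : Filter.Tendsto (fun j => φ (y j) - φ x - q * (y j - x)) Filter.atTop (nhds 0)) :
    Filter.Tendsto y Filter.atTop (nhds x) := by
  have hh0 : ∀ z, 0 ≤ breg φ x q z := fun z => by have := hq z; simp only [breg]; linarith
  have hxball : x ∈ Metric.ball x ε := Metric.mem_ball_self hε
  -- positivity of the remainder at x ± δ for 0 < δ < ε
  have hpos : ∀ δ : ℝ, 0 < δ → δ < ε → 0 < breg φ x q (x + δ) ∧ 0 < breg φ x q (x - δ) := by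
    intro δ hδ hδε
    constructor
    · by_contra hcon
      push_neg at hcon
      have h0 : breg φ x q (x + δ) = 0 := le_antisymm hcon (hh0 _)
      have hmem : x + δ ∈ Metric.ball x ε := by
        simp only [Metric.mem_ball, Real.dist_eq]
        rw [abs_of_pos (by linarith : (0:ℝ) < x + δ - x)]; linarith
      have hne : x ≠ x + δ := by intro h'; linarith
      have hstr := hsc.2 hxball hmem hne (by norm_num : (0:ℝ) < 1/2)
        (by norm_num : (0:ℝ) < 1/2) (by norm_num)
      simp only [smul_eq_mul] at hstr
      have hm := hh0 ((1/2) * x + (1/2) * (x + δ))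
      simp only [breg] at hm h0
      nlinarith
    · by_contra hcon
      push_neg at hcon
      have h0 : breg φ x q (x - δ) = 0 := le_antisymm hcon (hh0 _)
      have hmem : x - δ ∈ Metric.ball x ε := by
        simp only [Metric.mem_ball, Real.dist_eq]
        rw [abs_of_neg (by linarith : x - δ - x < 0)]; linarith
      have hne : x ≠ x - δ := by intro h'; linarith
      have hstr := hsc.2 hxball hmem hne (by norm_num : (0:ℝ) < 1/2)
        (by norm_num : (0:ℝ) < 1/2) (by norm_num)
      simp only [smul_eq_mul] at hstr
      have hm := hh0 ((1/2) * x + (1/2) * (x - δ))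
      simp only [breg] at hm h0
      nlinarith
  -- lower bound away from x
  have hlb : ∀ δ : ℝ, 0 < δ → ∀ z : ℝ, δ ≤ |z - x| →
      min (breg φ x q (x + δ)) (breg φ x q (x - δ)) ≤ breg φ x q z := by
    intro δ hδ z hz
    have hδ0 : δ ≠ 0 := ne_of_gt hδ
    rcases le_or_gt (x + δ) z with hge | hlt
    · refine le_trans (min_le_left _ _) ?_
      rcases eq_or_lt_of_le hge with rfl | hgt
      · exact le_refl _
      · have hs := hφ.secant_mono (Set.mem_univ x) (Set.mem_univ (x + δ)) (Set.mem_univ z)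
          (by intro h'; linarith) (by intro h'; linarith) (le_of_lt hgt)
        have e1 : (φ (x+δ) - φ x) / (x + δ - x) = breg φ x q (x+δ) / δ + q := by
          rw [show x + δ - x = δ by ring]
          simp only [breg]; field_simp; ring
        have e2 : (φ z - φ x) / (z - x) = breg φ x q z / (z - x) + q := by
          have hz0 : z - x ≠ 0 := by intro h'; nlinarith
          simp only [breg]; field_simp; ring
        rw [e1, e2] at hs
        have hzx : δ < z - x := by linarith
        have hdd : breg φ x q (x+δ) / δ ≤ breg φ x q z / (z - x) := by linarith
        rw [div_le_div_iff₀ hδ (by linarith)] at hdd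
        nlinarith [hh0 z]
    · have hle : z ≤ x - δ := by
        rcases abs_cases (z - x) with ⟨he, _⟩ | ⟨he, _⟩ <;> [linarith; linarith]
      refine le_trans (min_le_right _ _) ?_
      rcases eq_or_lt_of_le hle with rfl | hgt
      · simp
      · have hs := hφ.secant_mono (Set.mem_univ x) (Set.mem_univ z) (Set.mem_univ (x - δ))
          (by intro h'; linarith) (by intro h'; linarith) (le_of_lt hgt)
        have e1 : (φ (x-δ) - φ x) / (x - δ - x) = breg φ x q (x-δ) / (-δ) + q := by
          rw [show x - δ - x = -δ by ring]
          have : (-δ) ≠ 0 := neg_ne_zero.mpr hδ0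
          simp only [breg]; field_simp; ring
        have e2 : (φ z - φ x) / (z - x) = breg φ x q z / (z - x) + q := by
          have hz0 : z - x ≠ 0 := by intro h'; nlinarith
          simp only [breg]; field_simp; ring
        rw [e1, e2] at hs
        have hdd : breg φ x q z / (z - x) ≤ breg φ x q (x-δ) / (-δ) := by linarith
        rw [div_le_iff_of_neg (show z - x < 0 by nlinarith)] at hdd
        have key : breg φ x q (x - δ) ≤ breg φ x q (x-δ) / (-δ) * (z - x) := by
          rw [div_mul_eq_mul_div, le_div_iff_of_neg (by linarith : (-δ:ℝ) < 0)]
          nlinarith [hh0 (x - δ)]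
        linarith
  rw [Metric.tendsto_atTop]
  intro δ'' hδ''
  set δ : ℝ := min δ'' (ε / 2) with hδdef
  have hδpos : 0 < δ := lt_min hδ'' (by linarith)
  have hδε : δ < ε := lt_of_le_of_lt (min_le_right _ _) (by linarith)
  obtain ⟨hp1, hp2⟩ := hpos δ hδpos hδε
  have hc : 0 < min (breg φ x q (x + δ)) (breg φ x q (x - δ)) := lt_min hp1 hp2
  have hy' : Filter.Tendsto (fun j => breg φ x q (y j)) Filter.atTop (nhds 0) := hy
  have hev : ∀ᶠ j in Filter.atTop,
      breg φ x q (y j) < min (breg φ x q (x + δ)) (breg φ x q (x - δ)) :=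
    hy'.eventually_lt_const hc
  rw [Filter.eventually_atTop] at hev
  obtain ⟨N, hN⟩ := hev
  refine ⟨N, fun j hj => ?_⟩
  by_contra hcon
  push_neg at hcon
  have hd : δ ≤ |y j - x| := by
    rw [Real.dist_eq] at hcon
    exact le_trans (min_le_left _ _) hcon
  exact absurd (hlb δ hδpos (y j) hd) (by linarith [hN j hj])

/-- **Convex function upgrade (Lemma B.3).**
Let `(Ω,F,μ)` be a finite measure space, `1 < p < ∞`, and `f_n ⇀ f` weakly in `L^p(μ)`.
Let `φ : ℝ → ℝ` be convex with `φ(f_n) ⇀ φ(f)` weakly in `L¹(μ)`, and let `C` be the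
set where `φ` is strictly convex (points having a neighbourhood on which `φ` is
strictly convex).  Then, after passing to a subsequence, `f_n(ω) → f(ω)` for
μ-a.e. `ω` with `f(ω) ∈ C`. -/
theorem stmt_10 {Ω : Type*} [MeasurableSpace Ω] (μ : Measure Ω) [IsFiniteMeasure μ]
    (p : ℝ) (hp : 1 < p)
    (f : ℕ → Ω → ℝ) (flim : Ω → ℝ)
    (hfmem : ∀ n, MemLp (f n) (ENNReal.ofReal p) μ)
    (hflim : MemLp flim (ENNReal.ofReal p) μ)
    (hweak : ∀ g : Ω → ℝ, MemLp g (ENNReal.ofReal (p / (p - 1))) μ →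
      Filter.Tendsto (fun n => ∫ ω, f n ω * g ω ∂μ) Filter.atTop
        (nhds (∫ ω, flim ω * g ω ∂μ)))
    (φ : ℝ → ℝ) (hφ : ConvexOn ℝ Set.univ φ)
    (hφint : ∀ n, Integrable (fun ω => φ (f n ω)) μ)
    (hφlimint : Integrable (fun ω => φ (flim ω)) μ)
    (hφweak : ∀ g : Ω → ℝ, Measurable g → (∃ C : ℝ, ∀ ω, |g ω| ≤ C) →
      Filter.Tendsto (fun n => ∫ ω, φ (f n ω) * g ω ∂μ) Filter.atTop
        (nhds (∫ ω, φ (flim ω) * g ω ∂μ)))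
    (C : Set ℝ)
    (hC : ∀ x : ℝ, x ∈ C ↔ ∃ ε > 0, StrictConvexOn ℝ (Metric.ball x ε) φ) :
    ∃ s : ℕ → ℕ, StrictMono s ∧
      ∀ᵐ ω ∂μ, flim ω ∈ C →
        Filter.Tendsto (fun j => f (s j) ω) Filter.atTop (nhds (flim ω)) := by
  classical
  have hφc : Continuous φ := hφ.locallyLipschitz.continuous
  have hqmono : Monotone (lderivSel φ) := lderivSel_mono φ hφ
  have hqmeas : Measurable (lderivSel φ) := hqmono.measurable
  have hsub : ∀ x y : ℝ, lderivSel φ x * (y - x) ≤ φ y - φ x := lderivSel_subgrad φ hφ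
  have h1le : (1:ℝ≥0∞) ≤ ENNReal.ofReal p := ENNReal.one_le_ofReal.mpr hp.le
  -- measurable representatives
  set F : Ω → ℝ := hflim.1.mk flim with hFdef
  have hFmeas : Measurable F := hflim.1.stronglyMeasurable_mk.measurable
  have hFeq : flim =ᵐ[μ] F := hflim.1.ae_eq_mk
  set Fn : ℕ → Ω → ℝ := fun n => (hfmem n).1.mk (f n) with hFndef
  have hFnmeas : ∀ n, Measurable (Fn n) := fun n => (hfmem n).1.stronglyMeasurable_mk.measurable
  have hFneq : ∀ n, f n =ᵐ[μ] Fn n := fun n => (hfmem n).1.ae_eq_mk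
  -- the Bregman remainder
  set D : ℕ → Ω → ℝ := fun n ω => breg φ (F ω) (lderivSel φ (F ω)) (Fn n ω) with hDdef
  have hD0 : ∀ n ω, 0 ≤ D n ω := fun n ω => by
    simp only [hDdef, breg]; linarith [hsub (F ω) (Fn n ω)]
  have hDmeas : ∀ n, Measurable (D n) := fun n => by
    simp only [hDdef, breg]
    exact ((hφc.measurable.comp (hFnmeas n)).sub (hφc.measurable.comp hFmeas)).sub
      ((hqmeas.comp hFmeas).mul ((hFnmeas n).sub hFmeas))
  -- truncation sets and test functions
  set A : ℕ → Set Ω := fun M => {ω | |F ω| ≤ (M:ℝ)} with hAdef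
  have hAmeas : ∀ M, MeasurableSet (A M) := fun M => measurableSet_le hFmeas.abs measurable_const
  set g1 : ℕ → Ω → ℝ := fun M => (A M).indicator (fun _ => (1:ℝ)) with hg1def
  set g2 : ℕ → Ω → ℝ := fun M => (A M).indicator (fun ω => lderivSel φ (F ω)) with hg2def
  have hg1meas : ∀ M, Measurable (g1 M) := fun M => measurable_const.indicator (hAmeas M)
  have hg2meas : ∀ M, Measurable (g2 M) := fun M => (hqmeas.comp hFmeas).indicator (hAmeas M)
  have hg1bd : ∀ M ω, |g1 M ω| ≤ 1 := by
    intro M ω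
    by_cases h : ω ∈ A M
    · simp only [hg1def, Set.indicator_of_mem h]; norm_num
    · simp only [hg1def, Set.indicator_of_notMem h]; norm_num
  have hg2bd : ∀ M ω, |g2 M ω| ≤ |lderivSel φ (M:ℝ)| + |lderivSel φ (-(M:ℝ))| := by
    intro M ω
    by_cases h : ω ∈ A M
    · simp only [hg2def, Set.indicator_of_mem h]
      have hmem : |F ω| ≤ (M:ℝ) := h
      have h1 : lderivSel φ (F ω) ≤ lderivSel φ (M:ℝ) := hqmono (abs_le.mp hmem).2
      have h2 : lderivSel φ (-(M:ℝ)) ≤ lderivSel φ (F ω) := hqmono (abs_le.mp hmem).1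
      rw [abs_le]
      constructor
      · linarith [neg_abs_le (lderivSel φ (-(M:ℝ))), abs_nonneg (lderivSel φ (M:ℝ))]
      · linarith [le_abs_self (lderivSel φ (M:ℝ)), abs_nonneg (lderivSel φ (-(M:ℝ)))]
    · simp only [hg2def, Set.indicator_of_notMem h, abs_zero]
      positivity
  -- weak limits along the test functions
  have hlim1 : ∀ M, Filter.Tendsto (fun n => ∫ ω, φ (f n ω) * g1 M ω ∂μ) Filter.atTop
      (nhds (∫ ω, φ (flim ω) * g1 M ω ∂μ)) :=
    fun M => hφweak (g1 M) (hg1meas M) ⟨1, hg1bd M⟩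
  have hlim2 : ∀ M, Filter.Tendsto (fun n => ∫ ω, f n ω * g2 M ω ∂μ) Filter.atTop
      (nhds (∫ ω, flim ω * g2 M ω ∂μ)) := by
    intro M
    refine hweak (g2 M) ?_
    have hmem : MemLp (g2 M) ⊤ μ :=
      memLp_top_of_bound (hg2meas M).aestronglyMeasurable _
        (Filter.Eventually.of_forall fun ω => by
          rw [Real.norm_eq_abs]; exact hg2bd M ω)
    exact hmem.mono_exponent le_top
  -- integrability
  have hfint : ∀ n, Integrable (f n) μ := fun n => (hfmem n).integrable h1le
  have hflint : Integrable flim μ := hflim.integrable h1le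
  have intφn : ∀ n M, Integrable (fun ω => φ (f n ω) * g1 M ω) μ := by
    intro n M
    have h := Integrable.bdd_mul (hφint n) (hg1meas M).aestronglyMeasurable
      (Filter.Eventually.of_forall fun ω => by rw [Real.norm_eq_abs]; exact hg1bd M ω)
    have heq : (fun ω => φ (f n ω) * g1 M ω) = fun ω => g1 M ω * φ (f n ω) := by
      funext ω; ring
    rw [heq]; exact h
  have intφlim : ∀ M, Integrable (fun ω => φ (flim ω) * g1 M ω) μ := by
    intro M
    have h := Integrable.bdd_mul hφlimint (hg1meas M).aestronglyMeasurable
      (Filter.Eventually.of_forall fun ω => by rw [Real.norm_eq_abs]; exact hg1bd M ω)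
    have heq : (fun ω => φ (flim ω) * g1 M ω) = fun ω => g1 M ω * φ (flim ω) := by
      funext ω; ring
    rw [heq]; exact h
  have intfn : ∀ n M, Integrable (fun ω => f n ω * g2 M ω) μ := by
    intro n M
    have h := Integrable.bdd_mul (hfint n) (hg2meas M).aestronglyMeasurable
      (Filter.Eventually.of_forall fun ω => by rw [Real.norm_eq_abs]; exact hg2bd M ω)
    have heq : (fun ω => f n ω * g2 M ω) = fun ω => g2 M ω * f n ω := by
      funext ω; ring
    rw [heq]; exact h
  have intflim : ∀ M, Integrable (fun ω => flim ω * g2 M ω) μ := by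
    intro M
    have h := Integrable.bdd_mul hflint (hg2meas M).aestronglyMeasurable
      (Filter.Eventually.of_forall fun ω => by rw [Real.norm_eq_abs]; exact hg2bd M ω)
    have heq : (fun ω => flim ω * g2 M ω) = fun ω => g2 M ω * flim ω := by
      funext ω; ring
    rw [heq]; exact h
  -- mk versions
  have int_a : ∀ n M, Integrable (fun ω => φ (Fn n ω) * g1 M ω) μ := fun n M =>
    (intφn n M).congr ((hFneq n).mono fun ω h => by beta_reduce; rw [h])
  have int_b : ∀ n M, Integrable (fun ω => Fn n ω * g2 M ω) μ := fun n M =>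
    (intfn n M).congr ((hFneq n).mono fun ω h => by beta_reduce; rw [h])
  have int_c : ∀ M, Integrable (fun ω => F ω * g2 M ω) μ := fun M =>
    (intflim M).congr (hFeq.mono fun ω h => by beta_reduce; rw [h])
  have int_d : ∀ M, Integrable (fun ω => φ (F ω) * g1 M ω) μ := fun M =>
    (intφlim M).congr (hFeq.mono fun ω h => by beta_reduce; rw [h])
  -- pointwise representation of the truncated remainder
  have hptw : ∀ M n, (A M).indicator (D n) =
      fun ω => φ (Fn n ω) * g1 M ω - Fn n ω * g2 M ω + (F ω * g2 M ω - φ (F ω) * g1 M ω) := by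
    intro M n
    funext ω
    by_cases h : ω ∈ A M
    · simp only [hg1def, hg2def, Set.indicator_of_mem h, hDdef, breg]
      ring
    · simp only [hg1def, hg2def, Set.indicator_of_notMem h]
      ring
  have intInd : ∀ n M, Integrable ((A M).indicator (D n)) μ := by
    intro n M
    rw [hptw M n]
    exact ((int_a n M).sub (int_b n M)).add ((int_c M).sub (int_d M))
  -- the truncated integral and its limit
  set In : ℕ → ℕ → ℝ := fun M n => ∫ ω, (A M).indicator (D n) ω ∂μ with hIndef
  have hIn_eq : ∀ M n, In M n =
      (∫ ω, φ (f n ω) * g1 M ω ∂μ) - (∫ ω, f n ω * g2 M ω ∂μ) +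
        ((∫ ω, flim ω * g2 M ω ∂μ) - (∫ ω, φ (flim ω) * g1 M ω ∂μ)) := by
    intro M n
    have e1 : (∫ ω, φ (Fn n ω) * g1 M ω ∂μ) = ∫ ω, φ (f n ω) * g1 M ω ∂μ :=
      (integral_congr_ae (((hFneq n).mono fun ω h => by beta_reduce; rw [h]) :
        (fun ω => φ (f n ω) * g1 M ω) =ᵐ[μ] fun ω => φ (Fn n ω) * g1 M ω)).symm
    have e2 : (∫ ω, Fn n ω * g2 M ω ∂μ) = ∫ ω, f n ω * g2 M ω ∂μ :=
      (integral_congr_ae (((hFneq n).mono fun ω h => by beta_reduce; rw [h]) :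
        (fun ω => f n ω * g2 M ω) =ᵐ[μ] fun ω => Fn n ω * g2 M ω)).symm
    have e3 : (∫ ω, F ω * g2 M ω ∂μ) = ∫ ω, flim ω * g2 M ω ∂μ :=
      (integral_congr_ae ((hFeq.mono fun ω h => by beta_reduce; rw [h]) :
        (fun ω => flim ω * g2 M ω) =ᵐ[μ] fun ω => F ω * g2 M ω)).symm
    have e4 : (∫ ω, φ (F ω) * g1 M ω ∂μ) = ∫ ω, φ (flim ω) * g1 M ω ∂μ :=
      (integral_congr_ae ((hFeq.mono fun ω h => by beta_reduce; rw [h]) :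
        (fun ω => φ (flim ω) * g1 M ω) =ᵐ[μ] fun ω => φ (F ω) * g1 M ω)).symm
    calc In M n = ∫ ω, (φ (Fn n ω) * g1 M ω - Fn n ω * g2 M ω +
          (F ω * g2 M ω - φ (F ω) * g1 M ω)) ∂μ := by
            simp only [hIndef]; simp only [hptw M n]
      _ = (∫ ω, φ (Fn n ω) * g1 M ω ∂μ) - (∫ ω, Fn n ω * g2 M ω ∂μ) +
          ((∫ ω, F ω * g2 M ω ∂μ) - (∫ ω, φ (F ω) * g1 M ω ∂μ)) := by
            have h1 : Integrable (fun ω => φ (Fn n ω) * g1 M ω - Fn n ω * g2 M ω) μ :=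
              (int_a n M).sub (int_b n M)
            have h2 : Integrable (fun ω => F ω * g2 M ω - φ (F ω) * g1 M ω) μ :=
              (int_c M).sub (int_d M)
            rw [integral_add h1 h2, integral_sub (int_a n M) (int_b n M),
              integral_sub (int_c M) (int_d M)]
      _ = _ := by rw [e1, e2, e3, e4]
  have hInlim : ∀ M, Filter.Tendsto (fun n => In M n) Filter.atTop (nhds 0) := by
    intro M
    have t := ((hlim1 M).sub (hlim2 M)).add
      (tendsto_const_nhds (x := (∫ ω, flim ω * g2 M ω ∂μ) - ∫ ω, φ (flim ω) * g1 M ω ∂μ))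
    have hfun : (fun n => (∫ ω, φ (f n ω) * g1 M ω ∂μ) - (∫ ω, f n ω * g2 M ω ∂μ) +
        ((∫ ω, flim ω * g2 M ω ∂μ) - ∫ ω, φ (flim ω) * g1 M ω ∂μ)) = fun n => In M n :=
      funext fun n => (hIn_eq M n).symm
    rw [hfun] at t
    have hzero : (∫ ω, φ (flim ω) * g1 M ω ∂μ) - (∫ ω, flim ω * g2 M ω ∂μ) +
        ((∫ ω, flim ω * g2 M ω ∂μ) - ∫ ω, φ (flim ω) * g1 M ω ∂μ) = 0 := by ring
    rw [hzero] at t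
    exact t
  have hInnonneg : ∀ M n, 0 ≤ In M n := fun M n =>
    integral_nonneg fun ω => Set.indicator_apply_nonneg fun _ => hD0 n ω
  -- Markov inequality on the truncation set
  have mark : ∀ M n (ε : ℝ), 0 < ε →
      ((μ.restrict (A M)) {ω | ε ≤ D n ω}).toReal ≤ In M n / ε := by
    intro M n ε hε
    have hint : Integrable (D n) (μ.restrict (A M)) :=
      (integrable_indicator_iff (hAmeas M)).mp (intInd n M)
    have h := mul_meas_ge_le_integral_of_nonneg (μ := μ.restrict (A M))
      (Filter.Eventually.of_forall fun ω => hD0 n ω) hint ε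
    have heq : In M n = ∫ x, D n x ∂(μ.restrict (A M)) := by
      simp only [hIndef]; rw [integral_indicator (hAmeas M)]
    rw [measureReal_def] at h
    rw [le_div_iff₀ hε, heq]
    linarith [h]
  -- convergence in measure on the whole space
  have hTIM : TendstoInMeasure μ D Filter.atTop (fun _ => (0:ℝ)) := by
    rw [tendstoInMeasure_iff_dist]
    intro ε hε
    have hseteq : ∀ i : ℕ, {x | ε ≤ dist (D i x) ((fun _ : Ω => (0:ℝ)) x)} = {x | ε ≤ D i x} := by
      intro i; ext x
      simp [Real.dist_eq, abs_of_nonneg (hD0 i x)]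
    simp only [hseteq]
    rw [ENNReal.tendsto_atTop_zero]
    intro ε' hε'
    set r : ℝ≥0∞ := min 1 (ε' / 2) with hr
    have hr0 : 0 < r := lt_min one_pos (ENNReal.div_pos hε'.ne' ENNReal.ofNat_ne_top)
    have hrtop : r ≠ ⊤ := ne_top_of_le_ne_top ENNReal.one_ne_top (min_le_left _ _)
    have hrT : 0 < r.toReal := ENNReal.toReal_pos hr0.ne' hrtop
    -- choose the truncation level
    have hanti : Antitone fun M : ℕ => (A M)ᶜ := by
      intro M M' h
      refine Set.compl_subset_compl.mpr fun ω hω => ?_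
      have hω' : |F ω| ≤ (M:ℝ) := hω
      show |F ω| ≤ (M':ℝ)
      exact le_trans hω' (Nat.cast_le.mpr h)
    have hiempty : (⋂ M, (A M)ᶜ) = ∅ := by
      ext ω
      simp only [Set.mem_iInter, Set.mem_compl_iff, Set.mem_empty_iff_false, iff_false]
      push_neg
      obtain ⟨M, hM⟩ := exists_nat_ge |F ω|
      exact ⟨M, hM⟩
    have hinter : Filter.Tendsto (fun M : ℕ => μ ((A M)ᶜ)) Filter.atTop
        (nhds (μ (⋂ M, (A M)ᶜ))) :=
      tendsto_measure_iInter_atTop (fun M => ((hAmeas M).compl).nullMeasurableSet) hanti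
        ⟨0, measure_ne_top μ _⟩
    rw [hiempty, measure_empty] at hinter
    obtain ⟨M, hM⟩ := (hinter.eventually_lt_const hr0).exists
    -- choose the index threshold
    have hev := (hInlim M).eventually_lt_const (show (0:ℝ) < ε * r.toReal by positivity)
    rw [Filter.eventually_atTop] at hev
    obtain ⟨N, hN⟩ := hev
    refine ⟨N, fun n hn => ?_⟩
    have hDsetmeas : MeasurableSet {x | ε ≤ D n x} :=
      measurableSet_le measurable_const (hDmeas n)
    have hμint : μ ({x | ε ≤ D n x} ∩ A M) ≤ r := by
      have h1 : (μ.restrict (A M)) {x | ε ≤ D n x} = μ ({x | ε ≤ D n x} ∩ A M) :=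
        Measure.restrict_apply hDsetmeas
      have h2 := mark M n ε hε
      rw [h1] at h2
      have h3 : In M n / ε < r.toReal := by
        rw [div_lt_iff₀ hε]
        linarith [hN n hn]
      have hfin : μ ({x | ε ≤ D n x} ∩ A M) ≠ ⊤ := measure_ne_top μ _
      calc μ ({x | ε ≤ D n x} ∩ A M)
          = ENNReal.ofReal (μ ({x | ε ≤ D n x} ∩ A M)).toReal :=
            (ENNReal.ofReal_toReal hfin).symm
        _ ≤ ENNReal.ofReal r.toReal :=
            ENNReal.ofReal_le_ofReal (le_of_lt (lt_of_le_of_lt h2 h3))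
        _ = r := ENNReal.ofReal_toReal hrtop
    have hsubset : {x | ε ≤ D n x} ⊆ (A M)ᶜ ∪ ({x | ε ≤ D n x} ∩ A M) := by
      intro x hx
      by_cases h : x ∈ A M
      · exact Or.inr ⟨hx, h⟩
      · exact Or.inl h
    calc μ {x | ε ≤ D n x} ≤ μ ((A M)ᶜ ∪ ({x | ε ≤ D n x} ∩ A M)) := measure_mono hsubset
      _ ≤ μ ((A M)ᶜ) + μ ({x | ε ≤ D n x} ∩ A M) := measure_union_le _ _
      _ ≤ r + r := add_le_add hM.le hμint
      _ ≤ ε' / 2 + ε' / 2 := add_le_add (min_le_right _ _) (min_le_right _ _)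
      _ = ε' := ENNReal.add_halves ε'
  -- extract an a.e. convergent subsequence
  obtain ⟨s, hsmono, hae⟩ := hTIM.exists_seq_tendsto_ae
  refine ⟨s, hsmono, ?_⟩
  have hall : ∀ᵐ ω ∂μ, ∀ n, f n ω = Fn n ω := ae_all_iff.mpr hFneq
  filter_upwards [hae, hFeq, hall] with ω hDω hFω hfω hmemC
  obtain ⟨ε, hε, hsc⟩ := (hC (flim ω)).mp hmemC
  refine ptwise_conv φ hφ (flim ω) (lderivSel φ (flim ω))
    (fun y => hsub (flim ω) y) ε hε hsc (fun j => f (s j) ω) ?_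
  have hptw' : ∀ j, D (s j) ω =
      φ (f (s j) ω) - φ (flim ω) - lderivSel φ (flim ω) * (f (s j) ω - flim ω) := by
    intro j
    rw [hfω (s j), hFω]
    rfl
  exact hDω.congr hptw'
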